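/- arXiv:0802.3963 — 4 statements merged into one kernel-verified Lean document; each statement's English description precedes it below -/
import Mathlib

section
/- Let m, n, N ≥ 1. For each multi-index α = (α₁,…,α_n) with |α| ≤ m let a_α : ℝⁿ → ℂ^{N×N} be a bounded uniformly continuous matrix-valued function, and define the differential operator A by (Au)(x) = Σ_{|α|≤m} a_α(x)(D^α u)(x), where D^α = Π_j (−i ∂/∂x_j)^{α_j}. Let v : ℝⁿ → ℝ be a C^∞ function all of whose partial derivatives of order ≥ 1 are bounded and all of whose partial derivatives of order ≥ 2 tend to 0 as |x| → ∞, and set w := exp(v). Then there exist continuous matrix-valued functions b_β : ℝⁿ → ℂ^{N×N}, one for each multi-index β with |β| ≤ m − 1, satisfying lim_{|x|→∞} b_β(x) = 0, such that for every u ∈ C_c^∞(ℝⁿ, ℂ^N) and every x ∈ ℝⁿ: w(x)·A(w^{−1}u)(x) = Σ_{|α|≤m} a_α(x) Σ_{β≤α} binom(α,β) (i∇v(x))^{α−β} (D^β u)(x) + Σ_{|β|≤m−1} b_β(x)(D^β u)(x), where for a multi-index γ, (i∇v(x))^γ := Π_j (i ∂v/∂x_j(x))^{γ_j} and binom(α,β)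 = Π_j binom(α_j, β_j). -/
open Filter Topology

/-- The operator `D_j = -i ∂/∂x_j` acting on `ℂ^N`-valued functions on ℝⁿ. -/
noncomputable def Dmono (n N : ℕ) (j : Fin n)
    (u : EuclideanSpace ℝ (Fin n) → (Fin N → ℂ)) :
    EuclideanSpace ℝ (Fin n) → (Fin N → ℂ) :=
  fun x => (-Complex.I) • fderiv ℝ u x (EuclideanSpace.single j 1)

/-- The operator `D^α = Π_j (-i ∂/∂x_j)^{α_j}` for a multi-index `α`. -/
noncomputable def Dalpha (n N : ℕ) (α : Fin n → ℕ) :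
    (EuclideanSpace ℝ (Fin n) → (Fin N → ℂ)) →
      (EuclideanSpace ℝ (Fin n) → (Fin N → ℂ)) :=
  (List.ofFn fun j : Fin n => (Dmono n N j)^[α j]).foldr (· ∘ ·) id

/-- The finite set of multi-indices `α` on `Fin n` with `|α| ≤ m`. -/
def multiIndices (n m : ℕ) : Finset (Fin n → ℕ) :=
  (Fintype.piFinset fun _ => Finset.range (m + 1)).filter fun α => (∑ j, α j) ≤ m

namespace WC

lemma oneLe : (1 : WithTop ℕ∞) ≤ ((⊤:ℕ∞) : WithTop ℕ∞) := by exact_mod_cast le_top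
lemma oneNe : ((⊤:ℕ∞) : WithTop ℕ∞) ≠ 0 := by exact_mod_cast ENat.top_ne_zero
lemma topAdd : ((⊤:ℕ∞) : WithTop ℕ∞) + 1 ≤ ((⊤:ℕ∞) : WithTop ℕ∞) := by exact_mod_cast le_top

variable {n : ℕ}

local notation "X" => EuclideanSpace ℝ (Fin n)

noncomputable def Ds (j : Fin n) (f : X → ℂ) : X → ℂ :=
  fun x => -Complex.I * fderiv ℝ f x (EuclideanSpace.single j 1)

noncomputable def DW : List (Fin n) → (X → ℂ) → (X → ℂ)
  | [] => id
  | j :: l => fun f => DW l (Ds j f)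

lemma contDiff_Ds {f : X → ℂ} (hf : ContDiff ℝ (⊤:ℕ∞) f) (j : Fin n) :
    ContDiff ℝ (⊤:ℕ∞) (Ds j f) := by
  have h1 : ContDiff ℝ (⊤:ℕ∞) (fderiv ℝ f) := hf.fderiv_right topAdd
  exact contDiff_const.mul (h1.clm_apply contDiff_const)

lemma Ds_add {f g : X → ℂ} (hf : ContDiff ℝ (⊤:ℕ∞) f) (hg : ContDiff ℝ (⊤:ℕ∞) g) (j : Fin n) :
    Ds j (f + g) = Ds j f + Ds j g := by
  funext x
  have : fderiv ℝ (f + g) x = fderiv ℝ f x + fderiv ℝ g x := by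
    have := fderiv_add (𝕜 := ℝ) (f := f) (g := g) (x := x)
      (hf.differentiable oneNe x) (hg.differentiable oneNe x)
    simpa [Pi.add_def] using this
  simp [Ds, this]
  ring

lemma Ds_mul {f g : X → ℂ} (hf : ContDiff ℝ (⊤:ℕ∞) f) (hg : ContDiff ℝ (⊤:ℕ∞) g) (j : Fin n) :
    Ds j (f * g) = f * Ds j g + Ds j f * g := by
  funext x
  have : fderiv ℝ (f * g) x = f x • fderiv ℝ g x + g x • fderiv ℝ f x := by
    have := fderiv_mul (𝕜 := ℝ) (c := f) (d := g) (x := x)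
      (hf.differentiable oneNe x) (hg.differentiable oneNe x)
    simpa [Pi.mul_def] using this
  simp [Ds, this]
  ring

lemma Ds_const (c : ℂ) (j : Fin n) : Ds j (fun _ : X => c) = 0 := by
  funext x; simp [Ds]

lemma Ds_zero (j : Fin n) : Ds j (0 : X → ℂ) = 0 := Ds_const 0 j

lemma Ds_const_mul {f : X → ℂ} (hf : ContDiff ℝ (⊤:ℕ∞) f) (c : ℂ) (j : Fin n) :
    Ds j (fun x => c * f x) = fun x => c * Ds j f x := by
  funext x
  have : fderiv ℝ (fun x => c * f x) x = c • fderiv ℝ f x :=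
    fderiv_const_mul (hf.differentiable oneNe x) c
  simp [Ds, this]
  ring

lemma DW_contDiff : ∀ (l : List (Fin n)) {f : X → ℂ}, ContDiff ℝ (⊤:ℕ∞) f →
    ContDiff ℝ (⊤:ℕ∞) (DW l f)
  | [], f, hf => hf
  | j :: l, f, hf => DW_contDiff l (contDiff_Ds hf j)

lemma DW_add : ∀ (l : List (Fin n)) {f g : X → ℂ}, ContDiff ℝ (⊤:ℕ∞) f →
    ContDiff ℝ (⊤:ℕ∞) g → DW l (f + g) = DW l f + DW l g
  | [], f, g, _, _ => rfl
  | j :: l, f, g, hf, hg => by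
      show DW l (Ds j (f + g)) = _
      rw [Ds_add hf hg, DW_add l (contDiff_Ds hf j) (contDiff_Ds hg j)]
      rfl

lemma DW_const_mul : ∀ (l : List (Fin n)) {f : X → ℂ}, ContDiff ℝ (⊤:ℕ∞) f →
    ∀ c : ℂ, DW l (fun x => c * f x) = fun x => c * DW l f x
  | [], f, _, c => rfl
  | j :: l, f, hf, c => by
      show DW l (Ds j fun x => c * f x) = _
      rw [Ds_const_mul hf, DW_const_mul l (contDiff_Ds hf j) c]
      rfl

def IsB (f : X → ℂ) : Prop :=
  ContDiff ℝ (⊤:ℕ∞) f ∧ ∀ l : List (Fin n), ∃ C, ∀ x, ‖DW l f x‖ ≤ C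

def IsZ (f : X → ℂ) : Prop :=
  IsB f ∧ ∀ l : List (Fin n), Tendsto (DW l f) (cocompact X) (𝓝 0)

lemma IsB.contDiff {f : X → ℂ} (h : IsB f) : ContDiff ℝ (⊤:ℕ∞) f := h.1

lemma IsB.Ds {f : X → ℂ} (h : IsB f) (j : Fin n) : IsB (Ds j f) :=
  ⟨contDiff_Ds h.1 j, fun l => h.2 (j :: l)⟩

lemma IsZ.isB {f : X → ℂ} (h : IsZ f) : IsB f := h.1

lemma IsZ.Ds {f : X → ℂ} (h : IsZ f) (j : Fin n) : IsZ (Ds j f) :=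
  ⟨h.1.Ds j, fun l => h.2 (j :: l)⟩

lemma IsB_const (c : ℂ) : IsB (fun _ : X => c) := by
  refine ⟨contDiff_const, fun l => ?_⟩
  cases l with
  | nil => exact ⟨‖c‖, fun x => le_refl _⟩
  | cons j l =>
      refine ⟨0, fun x => ?_⟩
      show ‖DW l (Ds j fun _ => c) x‖ ≤ 0
      rw [Ds_const]
      have h0 : (0 : X → ℂ) = fun x => (0:ℂ) * (0:ℂ) := by funext; simp
      have : DW l (0 : X → ℂ) = fun x => (0:ℂ) * DW l (fun _ => (0:ℂ)) x := by
        rw [h0]; exact DW_const_mul l contDiff_const 0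
      rw [this]; simp

lemma DW_zero (l : List (Fin n)) : DW l (0 : X → ℂ) = 0 := by
  have h0 : (0 : X → ℂ) = fun x => (0:ℂ) * (0:ℂ) := by funext; simp
  funext x
  rw [h0, DW_const_mul l contDiff_const 0]
  simp

lemma IsZ_zero : IsZ (0 : X → ℂ) := by
  constructor
  · constructor
    · exact contDiff_const
    · intro l; exact ⟨0, fun x => by rw [DW_zero]; simp⟩
  · intro l; rw [DW_zero]; exact tendsto_const_nhds

lemma IsB.add {f g : X → ℂ} (hf : IsB f) (hg : IsB g) : IsB (f + g) := by
  refine ⟨hf.1.add hg.1, fun l => ?_⟩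
  obtain ⟨C1, h1⟩ := hf.2 l
  obtain ⟨C2, h2⟩ := hg.2 l
  refine ⟨C1 + C2, fun x => ?_⟩
  rw [DW_add l hf.1 hg.1]
  exact (norm_add_le _ _).trans (add_le_add (h1 x) (h2 x))

lemma IsZ.add {f g : X → ℂ} (hf : IsZ f) (hg : IsZ g) : IsZ (f + g) := by
  refine ⟨hf.1.add hg.1, fun l => ?_⟩
  rw [DW_add l hf.1.1 hg.1.1]
  have := (hf.2 l).add (hg.2 l); rw [add_zero] at this; exact this

lemma IsB.const_mul {f : X → ℂ} (hf : IsB f) (c : ℂ) : IsB (fun x => c * f x) := by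
  refine ⟨contDiff_const.mul hf.1, fun l => ?_⟩
  obtain ⟨C, h⟩ := hf.2 l
  refine ⟨‖c‖ * C, fun x => ?_⟩
  rw [DW_const_mul l hf.1]
  rw [norm_mul]
  exact mul_le_mul_of_nonneg_left (h x) (norm_nonneg c)

lemma IsZ.const_mul {f : X → ℂ} (hf : IsZ f) (c : ℂ) : IsZ (fun x => c * f x) := by
  refine ⟨hf.1.const_mul c, fun l => ?_⟩
  rw [DW_const_mul l hf.1.1]
  simpa using (hf.2 l).const_mul c

lemma isB_mul_aux : ∀ (l : List (Fin n)) {f g : X → ℂ}, IsB f → IsB g →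
    ∃ C, ∀ x, ‖DW l (f * g) x‖ ≤ C
  | [], f, g, hf, hg => by
      obtain ⟨C1, h1⟩ := hf.2 []
      obtain ⟨C2, h2⟩ := hg.2 []
      refine ⟨C1 * C2, fun x => ?_⟩
      show ‖f x * g x‖ ≤ C1 * C2
      rw [norm_mul]
      exact mul_le_mul (h1 x) (h2 x) (norm_nonneg _) ((norm_nonneg _).trans (h1 x))
  | j :: l, f, g, hf, hg => by
      show ∃ C, ∀ x, ‖DW l (Ds j (f * g)) x‖ ≤ C
      rw [Ds_mul hf.1 hg.1]
      rw [DW_add l (f := f * Ds j g) (g := Ds j f * g) (hf.1.mul (contDiff_Ds hg.1 j)) ((contDiff_Ds hf.1 j).mul hg.1)]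
      obtain ⟨C1, h1⟩ := isB_mul_aux l hf (hg.Ds j)
      obtain ⟨C2, h2⟩ := isB_mul_aux l (hf.Ds j) hg
      refine ⟨C1 + C2, fun x => ?_⟩
      exact (norm_add_le _ _).trans (add_le_add (h1 x) (h2 x))

lemma IsB.mul {f g : X → ℂ} (hf : IsB f) (hg : IsB g) : IsB (f * g) :=
  ⟨hf.1.mul hg.1, fun l => isB_mul_aux l hf hg⟩

lemma isZ_mul_aux : ∀ (l : List (Fin n)) {f g : X → ℂ}, IsZ f → IsB g →
    Tendsto (DW l (f * g)) (cocompact X) (𝓝 0)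
  | [], f, g, hf, hg => by
      obtain ⟨C, hC⟩ := hg.2 []
      have h1 : Tendsto (fun x => ‖f x‖ * C) (cocompact X) (𝓝 0) := by
        simpa [DW] using ((hf.2 []).norm).mul_const C
      refine squeeze_zero_norm (fun x => ?_) h1
      show ‖f x * g x‖ ≤ ‖f x‖ * C
      rw [norm_mul]
      exact mul_le_mul_of_nonneg_left (hC x) (norm_nonneg _)
  | j :: l, f, g, hf, hg => by
      show Tendsto (DW l (Ds j (f * g))) _ _
      rw [Ds_mul hf.1.1 hg.1]
      rw [DW_add l (f := f * Ds j g) (g := Ds j f * g) (hf.1.1.mul (contDiff_Ds hg.1 j)) ((contDiff_Ds hf.1.1 j).mul hg.1)]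
      have h1 := isZ_mul_aux l hf (hg.Ds j)
      have h2 := isZ_mul_aux l (hf.Ds j) hg
      have := h1.add h2; rw [add_zero] at this; exact this

lemma IsZ.mul_right {f g : X → ℂ} (hf : IsZ f) (hg : IsB g) : IsZ (f * g) :=
  ⟨hf.1.mul hg, fun l => isZ_mul_aux l hf hg⟩

lemma IsZ.mul_left {f g : X → ℂ} (hf : IsB f) (hg : IsZ g) : IsZ (f * g) := by
  rw [mul_comm]; exact hg.mul_right hf

lemma IsZ.sub {f g : X → ℂ} (hf : IsZ f) (hg : IsZ g) : IsZ (f - g) := by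
  have : f - g = f + (fun x => (-1 : ℂ) * g x) := by funext x; simp; ring
  rw [this]; exact hf.add (hg.const_mul (-1))


noncomputable def Dr (j : Fin n) (f : X → ℝ) : X → ℝ :=
  fun x => fderiv ℝ f x (EuclideanSpace.single j 1)

noncomputable def DWr : List (Fin n) → (X → ℝ) → (X → ℝ)
  | [] => id
  | j :: l => fun f => DWr l (Dr j f)

lemma contDiff_Dr {f : X → ℝ} (hf : ContDiff ℝ (⊤:ℕ∞) f) (j : Fin n) :
    ContDiff ℝ (⊤:ℕ∞) (Dr j f) :=
  (hf.fderiv_right topAdd).clm_apply contDiff_const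

lemma norm_DWr_le : ∀ (l : List (Fin n)) {f : X → ℝ}, ContDiff ℝ (⊤:ℕ∞) f →
    ∀ x, ‖DWr l f x‖ ≤ ‖iteratedFDeriv ℝ l.length f x‖
  | [], f, _, x => by
      simp [DWr, norm_iteratedFDeriv_zero]
  | j :: l, f, hf, x => by
      have h1 := norm_DWr_le l (contDiff_Dr hf j) x
      refine h1.trans ?_
      have h2 : ‖iteratedFDeriv ℝ l.length (Dr j f) x‖
          ≤ ‖EuclideanSpace.single (𝕜 := ℝ) j (1:ℝ)‖ * ‖iteratedFDeriv ℝ l.length (fderiv ℝ f) x‖ := by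
        exact norm_iteratedFDeriv_clm_apply_const (hf.fderiv_right topAdd).contDiffAt (by exact_mod_cast le_top)
      rw [EuclideanSpace.norm_single, norm_one, one_mul] at h2
      refine h2.trans ?_
      rw [norm_iteratedFDeriv_fderiv]
      simp [List.length_cons]

lemma Ds_ofReal {f : X → ℝ} (hf : ContDiff ℝ (⊤:ℕ∞) f) (j : Fin n) :
    Ds j (fun x => (f x : ℂ)) = fun x => -Complex.I * (Dr j f x : ℂ) := by
  funext x
  have hder : fderiv ℝ (fun x => (f x : ℂ)) x
      = Complex.ofRealCLM.comp (fderiv ℝ f x) :=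
    (Complex.ofRealCLM.hasFDerivAt.comp x (hf.differentiable oneNe x).hasFDerivAt).fderiv
  simp [Ds, Dr, hder]

lemma DW_ofReal : ∀ (l : List (Fin n)) {f : X → ℝ}, ContDiff ℝ (⊤:ℕ∞) f →
    DW l (fun x => (f x : ℂ)) = fun x => (-Complex.I) ^ l.length * (DWr l f x : ℂ)
  | [], f, _ => by funext x; simp [DW, DWr]
  | j :: l, f, hf => by
      show DW l (Ds j fun x => (f x : ℂ)) = _
      rw [Ds_ofReal hf j]
      have : (fun x => -Complex.I * (Dr j f x : ℂ))
          = fun x => -Complex.I * (fun y => ((Dr j f y : ℝ) : ℂ)) x := rfl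
      rw [this, DW_const_mul l (f := fun y => ((Dr j f y : ℝ) : ℂ)) (Complex.ofRealCLM.contDiff.comp (contDiff_Dr hf j)) (-Complex.I),
        DW_ofReal l (contDiff_Dr hf j)]
      funext x
      show -Complex.I * ((-Complex.I) ^ l.length * _) = _
      have hD : DWr (j::l) f = DWr l (Dr j f) := rfl
      rw [List.length_cons, pow_succ, hD]
      ring


noncomputable def pvC (v : X → ℝ) (j : Fin n) : X → ℂ :=
  fun x => (fderiv ℝ v x (EuclideanSpace.single j 1) : ℂ)

variable {v : EuclideanSpace ℝ (Fin n) → ℝ}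

section vfacts
variable (hv : ContDiff ℝ (⊤:ℕ∞) v)
  (hvbdd : ∀ k : ℕ, 1 ≤ k → ∃ C : ℝ, ∀ x, ‖iteratedFDeriv ℝ k v x‖ ≤ C)
  (hvzero : ∀ k : ℕ, 2 ≤ k →
    Tendsto (fun x => ‖iteratedFDeriv ℝ k v x‖) (cocompact (EuclideanSpace ℝ (Fin n))) (𝓝 0))

include hv hvbdd in
lemma isB_pvC (j : Fin n) : IsB (pvC v j) := by
  constructor
  · exact Complex.ofRealCLM.contDiff.comp (contDiff_Dr hv j)
  · intro l
    obtain ⟨C, hC⟩ := hvbdd (l.length + 1) (by omega)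
    refine ⟨C, fun x => ?_⟩
    have h1 : pvC v j = fun x => ((Dr j v x : ℝ) : ℂ) := rfl
    rw [h1, DW_ofReal l (contDiff_Dr hv j)]
    have h2 : DWr l (Dr j v) = DWr (j :: l) v := rfl
    rw [norm_mul, norm_pow, norm_neg, Complex.norm_I, one_pow, one_mul,
      Complex.norm_real, h2]
    exact (norm_DWr_le (j :: l) hv x).trans (by simpa using hC x)

include hv hvbdd hvzero in
lemma isZ_Ds_pvC (k j : Fin n) : IsZ (Ds k (pvC v j)) := by
  refine ⟨(isB_pvC hv hvbdd j).Ds k, fun l => ?_⟩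
  have h0 : DW l (Ds k (pvC v j)) = DW (k :: l) (pvC v j) := rfl
  have h1 : pvC v j = fun x => ((Dr j v x : ℝ) : ℂ) := rfl
  rw [h0, h1, DW_ofReal (k :: l) (contDiff_Dr hv j)]
  refine squeeze_zero_norm (fun x => ?_) (hvzero (l.length + 2) (by omega))
  have h2 : DWr (k :: l) (Dr j v) = DWr (j :: k :: l) v := rfl
  rw [norm_mul, norm_pow, norm_neg, Complex.norm_I, one_pow, one_mul,
    Complex.norm_real, h2]
  exact (norm_DWr_le (j :: k :: l) hv x).trans (by simp [List.length_cons])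

end vfacts

def ZD (f : X → ℂ) : Prop := IsB f ∧ ∀ j : Fin n, IsZ (Ds j f)

lemma ZD.isB {f : X → ℂ} (h : ZD f) : IsB f := h.1

lemma ZD_const (c : ℂ) : ZD (fun _ : X => c) :=
  ⟨IsB_const c, fun j => by rw [Ds_const]; exact IsZ_zero⟩

lemma ZD_one : ZD (1 : X → ℂ) := ZD_const 1

lemma ZD.mul {f g : X → ℂ} (hf : ZD f) (hg : ZD g) : ZD (f * g) := by
  refine ⟨hf.1.mul hg.1, fun j => ?_⟩
  rw [Ds_mul hf.1.1 hg.1.1]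
  exact IsZ.add (IsZ.mul_left hf.1 (hg.2 j)) (IsZ.mul_right (hf.2 j) hg.1)

lemma ZD.pow {f : X → ℂ} (hf : ZD f) : ∀ k : ℕ, ZD (f ^ k)
  | 0 => by rw [pow_zero]; exact ZD_one
  | k + 1 => by rw [pow_succ]; exact (hf.pow k).mul hf

lemma ZD_prod {ι : Type*} (s : Finset ι) (f : ι → (X → ℂ)) (hf : ∀ i ∈ s, ZD (f i)) :
    ZD (∏ i ∈ s, f i) :=
  Finset.prod_induction f ZD (fun _ _ => ZD.mul) ZD_one hf

lemma ZD_IpvC (hv : ContDiff ℝ (⊤:ℕ∞) v)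
    (hvbdd : ∀ k : ℕ, 1 ≤ k → ∃ C : ℝ, ∀ x, ‖iteratedFDeriv ℝ k v x‖ ≤ C)
    (hvzero : ∀ k : ℕ, 2 ≤ k →
      Tendsto (fun x => ‖iteratedFDeriv ℝ k v x‖) (cocompact (EuclideanSpace ℝ (Fin n))) (𝓝 0))
    (j : Fin n) : ZD (fun x => Complex.I * pvC v j x) := by
  constructor
  · exact (isB_pvC hv hvbdd j).const_mul Complex.I
  · intro k
    rw [Ds_const_mul (isB_pvC hv hvbdd j).1 Complex.I k]
    exact (isZ_Ds_pvC hv hvbdd hvzero k j).const_mul Complex.I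

noncomputable def MainC (v : X → ℝ) (α β : Fin n → ℕ) : X → ℂ :=
  fun x => ((∏ k, (α k).choose (β k) : ℕ) : ℂ)
    * ∏ k, (Complex.I * pvC v k x) ^ (α k - β k)

lemma MainC_eq (α β : Fin n → ℕ) :
    MainC v α β = (fun _ : X => ((∏ k, (α k).choose (β k) : ℕ) : ℂ))
      * ∏ k, (fun x => Complex.I * pvC v k x) ^ (α k - β k) := by
  funext x
  simp [MainC, Finset.prod_apply]

lemma ZD_MainC (hv : ContDiff ℝ (⊤:ℕ∞) v)
    (hvbdd : ∀ k : ℕ, 1 ≤ k → ∃ C : ℝ, ∀ x, ‖iteratedFDeriv ℝ k v x‖ ≤ C)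
    (hvzero : ∀ k : ℕ, 2 ≤ k →
      Tendsto (fun x => ‖iteratedFDeriv ℝ k v x‖) (cocompact (EuclideanSpace ℝ (Fin n))) (𝓝 0))
    (α β : Fin n → ℕ) : ZD (MainC v α β) := by
  rw [MainC_eq]
  exact (ZD_const _).mul (ZD_prod _ _ fun k _ =>
    (ZD_IpvC hv hvbdd hvzero k).pow _)


def addE (α : Fin n → ℕ) (j : Fin n) : Fin n → ℕ := Function.update α j (α j + 1)
def subE (α : Fin n → ℕ) (j : Fin n) : Fin n → ℕ := Function.update α j (α j - 1)

lemma addE_apply (α : Fin n → ℕ) (j i : Fin n) :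
    addE α j i = if i = j then α i + 1 else α i := by
  rcases eq_or_ne i j with h | h
  · subst h; simp [addE]
  · simp [addE, Function.update_of_ne h, if_neg h]

lemma subE_apply (α : Fin n → ℕ) (j i : Fin n) :
    subE α j i = if i = j then α i - 1 else α i := by
  rcases eq_or_ne i j with h | h
  · subst h; simp [subE]
  · simp [subE, Function.update_of_ne h, if_neg h]

lemma subE_addE (α : Fin n → ℕ) (j : Fin n) : subE (addE α j) j = α := by
  funext i
  rcases eq_or_ne i j with h | h
  · subst h; simp [addE_apply, subE_apply]
  · simp [addE_apply, subE_apply, h]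

lemma addE_subE (α : Fin n → ℕ) (j : Fin n) (h : α j ≠ 0) : addE (subE α j) j = α := by
  funext i
  rcases eq_or_ne i j with h' | h'
  · subst h'; simp [addE_apply, subE_apply]; omega
  · simp [addE_apply, subE_apply, h']

noncomputable def Co (v : EuclideanSpace ℝ (Fin n) → ℝ) :
    List (Fin n) → (Fin n → ℕ) → (EuclideanSpace ℝ (Fin n) → ℂ)
  | [], β => if β = 0 then 1 else 0
  | j :: l, β => (fun x => Complex.I * pvC v j x) * Co v l β + Ds j (Co v l β)
      + (if β j = 0 then 0 else Co v l (subE β j))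

section cofacts
variable {v : EuclideanSpace ℝ (Fin n) → ℝ}
variable (hv : ContDiff ℝ (⊤:ℕ∞) v)
  (hvbdd : ∀ k : ℕ, 1 ≤ k → ∃ C : ℝ, ∀ x, ‖iteratedFDeriv ℝ k v x‖ ≤ C)
  (hvzero : ∀ k : ℕ, 2 ≤ k →
    Tendsto (fun x => ‖iteratedFDeriv ℝ k v x‖) (cocompact (EuclideanSpace ℝ (Fin n))) (𝓝 0))

include hv hvbdd in
lemma isB_Co : ∀ (l : List (Fin n)) (β : Fin n → ℕ), IsB (Co v l β)
  | [], β => by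
      rw [Co]
      split
      · exact IsB_const 1
      · exact IsB_const 0
  | j :: l, β => by
      rw [Co]
      refine IsB.add (IsB.add ?_ ?_) ?_
      · exact ((isB_pvC hv hvbdd j).const_mul Complex.I).mul (isB_Co l β)
      · exact (isB_Co l β).Ds j
      · split
        · exact IsB_const 0
        · exact isB_Co l (subE β j)

lemma Co_eq_zero : ∀ (l : List (Fin n)) (β : Fin n → ℕ),
    (¬ ∀ i, β i ≤ l.count i) → Co v l β = 0
  | [], β, h => by
      rw [Co, if_neg]
      intro h0
      exact h (by simp [h0])
  | j :: l, β, h => by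
      have hβ : ¬ ∀ i, β i ≤ l.count i := by
        intro h'
        exact h fun i => (h' i).trans (by
          rw [List.count_cons]
          omega)
      rw [Co, Co_eq_zero l β hβ, Ds_zero, mul_zero]
      have h3 : (if β j = 0 then 0 else Co v l (subE β j))
          = (0 : EuclideanSpace ℝ (Fin n) → ℂ) := by
        split
        · rfl
        · next hj =>
            refine Co_eq_zero l (subE β j) ?_
            intro h'
            apply h
            intro i
            have hti := h' i
            rw [subE_apply] at hti
            have hc : (j :: l).count i = l.count i + if i = j then 1 else 0 := by
              rcases eq_or_ne i j with rfl | h''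
              · simp [List.count_cons]
              · simp [List.count_cons, h'', Ne.symm h'']
            rw [hc]
            rcases eq_or_ne i j with rfl | h''
            · rw [if_pos rfl] at hti; rw [if_pos rfl]; omega
            · rw [if_neg h''] at hti; rw [if_neg h'']; omega
      rw [h3]
      simp

lemma Co_top : ∀ l : List (Fin n), Co v l (fun i => l.count i) = 1
  | [] => by
      rw [Co, if_pos]
      funext i; simp
  | j :: l => by
      rw [Co]
      have hcnt : (fun i => (j :: l).count i) = addE (fun i => l.count i) j := by
        funext i
        rw [addE_apply, List.count_cons]
        rcases eq_or_ne i j with rfl | h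
        · simp
        · simp [h, Ne.symm h]
      have h1 : Co v l (addE (fun i => l.count i) j) = 0 := by
        refine Co_eq_zero l _ ?_
        push_neg
        exact ⟨j, by simp [addE_apply]⟩
      have hcj : ¬ List.count j (j :: l) = 0 := by simp [List.count_cons]
      rw [hcnt, h1, Ds_zero, mul_zero, if_neg hcj, subE_addE, Co_top l]
      simp

lemma pascal_scalar (z : ℂ) (a b : ℕ) :
    z * ((a.choose b : ℂ) * z ^ (a - b))
      + (if b = 0 then (0:ℂ) else ((a.choose (b-1)) : ℂ) * z ^ (a - (b-1)))
      = (((a+1).choose b : ℂ)) * z ^ (a + 1 - b) := by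
  rcases b with _ | b'
  · simp [pow_succ]
    ring
  · rw [if_neg (Nat.succ_ne_zero b')]
    rcases le_or_gt (b' + 1) a with h | h
    · have e1 : a - b' = (a - (b' + 1)) + 1 := by omega
      have e2 : a + 1 - (b' + 1) = (a - (b' + 1)) + 1 := by omega
      have e3 : b' + 1 - 1 = b' := rfl
      rw [e3, e1, e2, Nat.choose_succ_succ a b']
      push_cast
      rw [pow_succ]
      ring
    · rw [Nat.add_sub_cancel]
      rcases eq_or_lt_of_le (Nat.lt_succ_iff.mp h) with h' | h'
      · subst h'
        rw [Nat.choose_self, Nat.choose_self, Nat.choose_eq_zero_of_lt (Nat.lt_succ_self _)]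
        simp [Nat.sub_self]
      · rw [Nat.choose_eq_zero_of_lt (by omega), Nat.choose_eq_zero_of_lt (by omega),
          Nat.choose_eq_zero_of_lt (by omega)]
        simp

lemma pascal (α β : Fin n → ℕ) (j : Fin n) :
    (fun x => Complex.I * pvC v j x) * MainC v α β
      + (if β j = 0 then 0 else MainC v α (subE β j))
      = MainC v (addE α j) β := by
  funext x
  have split1 : ∀ (γ δ : Fin n → ℕ),
      MainC v γ δ x = (((γ j).choose (δ j) : ℂ) * (Complex.I * pvC v j x) ^ (γ j - δ j))
        * ((∏ k ∈ Finset.univ.erase j, ((γ k).choose (δ k) : ℂ))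
          * ∏ k ∈ Finset.univ.erase j, (Complex.I * pvC v k x) ^ (γ k - δ k)) := by
    intro γ δ
    rw [MainC]
    push_cast
    rw [← Finset.mul_prod_erase Finset.univ _ (Finset.mem_univ j),
      ← Finset.mul_prod_erase Finset.univ
        (fun k => (Complex.I * pvC v k x) ^ (γ k - δ k)) (Finset.mem_univ j)]
    ring
  have erase_eq : ∀ (γ δ : Fin n → ℕ), (∀ k : Fin n, k ≠ j → γ k = α k ∧ δ k = β k) →
      (∏ k ∈ Finset.univ.erase j, ((γ k).choose (δ k) : ℂ))
        * ∏ k ∈ Finset.univ.erase j, (Complex.I * pvC v k x) ^ (γ k - δ k)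
      = (∏ k ∈ Finset.univ.erase j, ((α k).choose (β k) : ℂ))
        * ∏ k ∈ Finset.univ.erase j, (Complex.I * pvC v k x) ^ (α k - β k) := by
    intro γ δ h
    congr 1
    · exact Finset.prod_congr rfl fun k hk => by
        rw [(h k (Finset.ne_of_mem_erase hk)).1, (h k (Finset.ne_of_mem_erase hk)).2]
    · exact Finset.prod_congr rfl fun k hk => by
        rw [(h k (Finset.ne_of_mem_erase hk)).1, (h k (Finset.ne_of_mem_erase hk)).2]
  have h1 := split1 α β
  have h2 := split1 (addE α j) β
  have h3 := split1 α (subE β j)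
  rw [erase_eq (addE α j) β (fun k hk => ⟨by rw [addE_apply, if_neg hk], rfl⟩)] at h2
  rw [erase_eq α (subE β j) (fun k hk => ⟨rfl, by rw [subE_apply, if_neg hk]⟩)] at h3
  have hadd : addE α j j = α j + 1 := by simp [addE_apply]
  have hsub : subE β j j = β j - 1 := by simp [subE_apply]
  rw [hadd] at h2
  rw [hsub] at h3
  have hp := pascal_scalar (Complex.I * pvC v j x) (α j) (β j)
  by_cases hb : β j = 0
  · rw [if_pos hb]
    rw [if_pos hb] at hp
    simp only [Pi.add_apply, Pi.mul_apply, Pi.zero_apply]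
    rw [h1, h2]
    linear_combination ((∏ k ∈ Finset.univ.erase j, ((α k).choose (β k) : ℂ))
      * ∏ k ∈ Finset.univ.erase j, (Complex.I * pvC v k x) ^ (α k - β k)) * hp
  · rw [if_neg hb]
    rw [if_neg hb] at hp
    simp only [Pi.add_apply, Pi.mul_apply]
    rw [h1, h2, h3]
    linear_combination ((∏ k ∈ Finset.univ.erase j, ((α k).choose (β k) : ℂ))
      * ∏ k ∈ Finset.univ.erase j, (Complex.I * pvC v k x) ^ (α k - β k)) * hp

lemma cnt_cons (j : Fin n) (l : List (Fin n)) :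
    (fun i => (j :: l).count i) = addE (fun i => l.count i) j := by
  funext i
  rw [addE_apply, List.count_cons]
  rcases eq_or_ne i j with rfl | h
  · simp
  · simp [h, Ne.symm h]

lemma MainC_self (α : Fin n → ℕ) (x : EuclideanSpace ℝ (Fin n)) : MainC v α α x = 1 := by
  rw [MainC]
  simp [Nat.choose_self, Nat.sub_self]

include hv hvbdd hvzero in
lemma isZ_R : ∀ (l : List (Fin n)) (β : Fin n → ℕ),
    IsZ (Co v l β - MainC v (fun i => l.count i) β)
  | [], β => by
      have hz : Co v [] β - MainC v (fun i => List.count i ([] : List (Fin n))) β = 0 := by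
        funext x
        have hcnt : (fun i => List.count i ([] : List (Fin n))) = (fun _ => 0 : Fin n → ℕ) := by
          funext i; simp
        rw [Co, hcnt]
        by_cases hβ : β = (0 : Fin n → ℕ)
        · rw [if_pos hβ, hβ]
          have : MainC v (fun _ => 0) (0 : Fin n → ℕ) x = 1 := by
            rw [MainC]; simp
          simp [this]
        · rw [if_neg hβ]
          have hM : MainC v (fun _ => 0) β x = 0 := by
            obtain ⟨k, hk⟩ : ∃ k, β k ≠ 0 := by
              by_contra h; push_neg at h
              exact hβ (funext fun i => h i)
            rw [MainC]
            have hzero : (∏ k, ((fun _ => 0 : Fin n → ℕ) k).choose (β k)) = 0 :=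
              Finset.prod_eq_zero (Finset.mem_univ k)
                (Nat.choose_eq_zero_of_lt (Nat.pos_of_ne_zero hk))
            rw [hzero]
            simp
          simp [hM]
      rw [hz]
      exact IsZ_zero
  | j :: l, β => by
      have key : Co v (j :: l) β - MainC v (fun i => (j :: l).count i) β
          = (fun x => Complex.I * pvC v j x) * (Co v l β - MainC v (fun i => l.count i) β)
            + (Ds j (MainC v (fun i => l.count i) β)
                + Ds j (Co v l β - MainC v (fun i => l.count i) β))
            + (if β j = 0 then 0
                else (Co v l (subE β j) - MainC v (fun i => l.count i) (subE β j))) := by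
        rw [cnt_cons, ← pascal (fun i => l.count i) β j, Co]
        have hds : Ds j (Co v l β)
            = Ds j (MainC v (fun i => l.count i) β)
              + Ds j (Co v l β - MainC v (fun i => l.count i) β) := by
          rw [← Ds_add (f := MainC v (fun i => l.count i) β)
            (g := Co v l β - MainC v (fun i => l.count i) β)
            (ZD_MainC hv hvbdd hvzero _ β).1.1
            (((isB_Co hv hvbdd l β).1).sub (ZD_MainC hv hvbdd hvzero _ β).1.1) j]
          congr 1
          rw [add_sub_cancel]
        rw [hds]
        by_cases hb : β j = 0
        · rw [if_pos hb, if_pos hb, if_pos hb]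
          ring
        · rw [if_neg hb, if_neg hb, if_neg hb]
          ring
      rw [key]
      refine IsZ.add (IsZ.add ?_ (IsZ.add ?_ ?_)) ?_
      · exact IsZ.mul_left ((isB_pvC hv hvbdd j).const_mul Complex.I)
          (isZ_R l β)
      · exact (ZD_MainC hv hvbdd hvzero _ β).2 j
      · exact (isZ_R l β).Ds j
      · split
        · exact IsZ_zero
        · exact isZ_R l (subE β j)

end cofacts


section vector
variable {N : ℕ}

noncomputable def Dword (n N : ℕ) : List (Fin n) →
    (EuclideanSpace ℝ (Fin n) → (Fin N → ℂ)) → (EuclideanSpace ℝ (Fin n) → (Fin N → ℂ))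
  | [] => id
  | j :: l => fun u => Dmono n N j (Dword n N l u)

def wrd (α : Fin n → ℕ) : List (Fin n) :=
  (List.finRange n).flatMap fun j => List.replicate (α j) j


lemma bind_cons'' (a : Fin n) (L : List (Fin n)) (f : Fin n → List (Fin n)) :
    (a :: L).flatMap f = f a ++ L.flatMap f := rfl

lemma Dword_append (l₁ l₂ : List (Fin n)) (u) :
    Dword n N (l₁ ++ l₂) u = Dword n N l₁ (Dword n N l₂ u) := by
  induction l₁ with
  | nil => rfl
  | cons j l ih => show Dmono n N j (Dword n N (l ++ l₂) u) = _; rw [ih]; rfl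

lemma Dword_replicate (k : ℕ) (j : Fin n) (u) :
    Dword n N (List.replicate k j) u = (Dmono n N j)^[k] u := by
  induction k with
  | zero => rfl
  | succ k ih =>
      rw [List.replicate_succ]
      show Dmono n N j (Dword n N (List.replicate k j) u) = _
      rw [ih, Function.iterate_succ_apply']

lemma Dalpha_eq_Dword (α : Fin n → ℕ) (u) :
    Dalpha n N α u = Dword n N (wrd α) u := by
  have gen : ∀ L : List (Fin n),
      ((L.map fun j => (Dmono n N j)^[α j]).foldr (· ∘ ·) id) u
        = Dword n N (L.flatMap fun j => List.replicate (α j) j) u := by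
    intro L
    induction L with
    | nil => rfl
    | cons a L ih =>
        show (Dmono n N a)^[α a] (((L.map _).foldr (· ∘ ·) id) u) = _
        rw [ih, bind_cons'', Dword_append, Dword_replicate]
  rw [Dalpha, List.ofFn_eq_map]
  exact gen (List.finRange n)

lemma Dword_bind_addE (j : Fin n) (β : Fin n → ℕ) (hβ : ∀ i, i < j → β i = 0) :
    ∀ L : List (Fin n), L.Pairwise (· < ·) → j ∈ L →
    ∀ u, Dword n N (L.flatMap fun i => List.replicate (addE β j i) i) u
      = Dmono n N j (Dword n N (L.flatMap fun i => List.replicate (β i) i) u)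
  | [], _, hj, _ => absurd hj List.not_mem_nil
  | a :: L, hp, hj, u => by
      obtain ⟨ha, hpL⟩ := List.pairwise_cons.mp hp
      rw [bind_cons'', bind_cons'']
      rcases eq_or_ne j a with rfl | hne
      · have haddj : addE β j j = β j + 1 := by simp [addE_apply]
        have hrest : L.flatMap (fun i => List.replicate (addE β j i) i)
            = L.flatMap fun i => List.replicate (β i) i := by
          apply List.flatMap_congr  -- maybe different name
          intro i hi
          rw [addE_apply, if_neg (by intro h; subst h; exact lt_irrefl _ (ha i hi))]
        rw [haddj, hrest, List.replicate_succ]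
        show Dmono n N j (Dword n N (List.replicate (β j) j ++ _) u) = _
        rfl
      · have hjL : j ∈ L := by
          rcases List.mem_cons.mp hj with h | h
          · exact absurd h hne
          · exact h
        have haj : a < j := ha j hjL
        have hba : β a = 0 := hβ a haj
        have haa : addE β j a = 0 := by
          rw [addE_apply, if_neg (by intro h; subst h; exact hne rfl), hba]
        rw [haa, hba, List.replicate_zero, List.nil_append, List.nil_append]
        exact Dword_bind_addE j β hβ L hpL hjL u

lemma Dmono_Dalpha_addE (j : Fin n) (β : Fin n → ℕ) (hβ : ∀ i, i < j → β i = 0) (u) :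
    Dalpha n N (addE β j) u = Dmono n N j (Dalpha n N β u) := by
  rw [Dalpha_eq_Dword, Dalpha_eq_Dword, wrd, wrd]
  exact Dword_bind_addE j β hβ (List.finRange n) (List.pairwise_lt_finRange n)
    (List.mem_finRange j) u

lemma count_wrd (α : Fin n → ℕ) (j : Fin n) : (wrd α).count j = α j := by
  have gen : ∀ L : List (Fin n), L.Nodup → j ∈ L →
      (L.flatMap fun i => List.replicate (α i) i).count j = α j := by
    intro L
    induction L with
    | nil => intro _ h; exact absurd h List.not_mem_nil
    | cons a L ih =>
        intro hnd hj
        rw [bind_cons'', List.count_append]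
        rcases eq_or_ne j a with rfl | hne
        · have hjL : j ∉ L := (List.nodup_cons.mp hnd).1
          have h0 : (L.flatMap fun i => List.replicate (α i) i).count j = 0 := by
            rw [List.count_eq_zero]
            intro hmem
            obtain ⟨i, hi, hmem'⟩ := List.mem_flatMap.mp hmem
            rw [List.eq_of_mem_replicate hmem'] at hjL
            exact hjL hi
          rw [h0, List.count_replicate, if_pos (by simp)]
          simp
        · have hjL : j ∈ L := by
            rcases List.mem_cons.mp hj with h | h
            · exact absurd h hne
            · exact h
          rw [List.count_replicate, if_neg (by simpa using hne.symm),
            ih (List.nodup_cons.mp hnd).2 hjL]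
          simp
  exact gen (List.finRange n) (List.nodup_finRange n) (List.mem_finRange j)

lemma sorted_wrd (α : Fin n → ℕ) : (wrd α).Pairwise (· ≤ ·) := by
  have gen : ∀ L : List (Fin n), L.Pairwise (· < ·) →
      (L.flatMap fun i => List.replicate (α i) i).Pairwise (· ≤ ·) := by
    intro L
    induction L with
    | nil => intro _; simp
    | cons a L ih =>
        intro hp
        obtain ⟨ha, hpL⟩ := List.pairwise_cons.mp hp
        rw [bind_cons'', List.pairwise_append]
        refine ⟨List.pairwise_replicate.mpr (by simp), ih hpL, ?_⟩
        intro b hb c hc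
        rw [List.eq_of_mem_replicate hb]
        obtain ⟨i, hi, hc'⟩ := List.mem_flatMap.mp hc
        rw [List.eq_of_mem_replicate hc']
        exact (ha i hi).le
  exact gen (List.finRange n) (List.pairwise_lt_finRange n)

lemma contDiff_Dmono {u} (hu : ContDiff ℝ (⊤:ℕ∞) u) (j : Fin n) :
    ContDiff ℝ (⊤:ℕ∞) (Dmono n N j u) := by
  have h1 : ContDiff ℝ (⊤:ℕ∞) (fderiv ℝ u) := hu.fderiv_right topAdd
  exact (h1.clm_apply contDiff_const).const_smul _

lemma contDiff_Dword {u} (hu : ContDiff ℝ (⊤:ℕ∞) u) :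
    ∀ l : List (Fin n), ContDiff ℝ (⊤:ℕ∞) (Dword n N l u)
  | [] => hu
  | j :: l => contDiff_Dmono (contDiff_Dword hu l) j

lemma contDiff_Dalpha {u} (hu : ContDiff ℝ (⊤:ℕ∞) u) (α : Fin n → ℕ) :
    ContDiff ℝ (⊤:ℕ∞) (Dalpha n N α u) := by
  rw [Dalpha_eq_Dword]; exact contDiff_Dword hu _

lemma Dmono_smul {f : EuclideanSpace ℝ (Fin n) → ℂ} {u : EuclideanSpace ℝ (Fin n) → (Fin N → ℂ)}
    {x} (hf : DifferentiableAt ℝ f x) (hu : DifferentiableAt ℝ u x) :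
    Dmono n N j (fun y => f y • u y) x = Ds j f x • u x + f x • Dmono n N j u x := by
  have h := (hf.hasFDerivAt.fun_smul hu.hasFDerivAt).fderiv
  rw [Dmono, h]
  simp only [ContinuousLinearMap.add_apply, ContinuousLinearMap.coe_smul', Pi.smul_apply,
    ContinuousLinearMap.smulRight_apply]
  rw [smul_add, Ds]
  rw [smul_comm (-Complex.I) (f x)]
  rw [smul_smul]
  ring_nf
  rw [Dmono]
  module

lemma Dmono_sum {ι : Type*} (s : Finset ι)
    (F : ι → EuclideanSpace ℝ (Fin n) → (Fin N → ℂ)) {x}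
    (hF : ∀ i ∈ s, DifferentiableAt ℝ (F i) x) (j : Fin n) :
    Dmono n N j (fun y => ∑ i ∈ s, F i y) x = ∑ i ∈ s, Dmono n N j (F i) x := by
  rw [Dmono, fderiv_fun_sum hF]
  rw [ContinuousLinearMap.sum_apply, Finset.smul_sum]
  rfl

end vector


section main
variable {N : ℕ}
variable {v : EuclideanSpace ℝ (Fin n) → ℝ}

lemma real_smul_pi (r : ℝ) (w : Fin N → ℂ) : r • w = ((r : ℂ)) • w := by
  funext i
  simp [Pi.smul_apply, Complex.real_smul]

lemma econj (hv : ContDiff ℝ (⊤:ℕ∞) v) {h : EuclideanSpace ℝ (Fin n) → (Fin N → ℂ)}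
    (hh : ContDiff ℝ (⊤:ℕ∞) h) (j : Fin n) (x : EuclideanSpace ℝ (Fin n)) :
    Real.exp (v x) • Dmono n N j (fun y => Real.exp (-v y) • h y) x
      = Dmono n N j h x + (Complex.I * pvC v j x) • h x := by
  have hsm : (fun y => Real.exp (-v y) • h y)
      = fun y => ((Real.exp (-(v y)) : ℝ) : ℂ) • h y := by
    funext y
    exact real_smul_pi _ _
  have hneg : HasFDerivAt (fun y => -(v y)) (-(fderiv ℝ v x)) x :=
    ((hv.differentiable oneNe x).hasFDerivAt).neg
  have hexp : HasFDerivAt (fun y => Real.exp (-(v y)))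
      (Real.exp (-(v x)) • (-(fderiv ℝ v x))) x := hneg.exp
  have hcE : HasFDerivAt (fun y => ((Real.exp (-(v y)) : ℝ) : ℂ))
      (Complex.ofRealCLM.comp (Real.exp (-(v x)) • (-(fderiv ℝ v x)))) x :=
    Complex.ofRealCLM.hasFDerivAt.comp x hexp
  have hfd : fderiv ℝ (fun y => ((Real.exp (-(v y)) : ℝ) : ℂ)) x
      = Complex.ofRealCLM.comp (Real.exp (-(v x)) • (-(fderiv ℝ v x))) := hcE.fderiv
  rw [hsm, Dmono_smul hcE.differentiableAt (hh.differentiable oneNe x)]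
  have hDs : Ds j (fun y => ((Real.exp (-(v y)) : ℝ) : ℂ)) x
      = -Complex.I * ((Real.exp (-(v x)) * (-(fderiv ℝ v x (EuclideanSpace.single j 1))) : ℝ) : ℂ) := by
    rw [Ds, hfd]
    simp
  rw [hDs, real_smul_pi, smul_add, smul_smul, smul_smul]
  have h1 : ((Real.exp (v x) : ℝ) : ℂ) * ((Real.exp (-(v x)) : ℝ) : ℂ) = 1 := by
    rw [← Complex.ofReal_mul, ← Real.exp_add]
    simp
  have h2 : ((Real.exp (v x) : ℝ) : ℂ)
      * (-Complex.I * ((Real.exp (-(v x)) * (-(fderiv ℝ v x (EuclideanSpace.single j 1))) : ℝ) : ℂ))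
      = Complex.I * pvC v j x := by
    rw [pvC, Complex.ofReal_mul, Complex.ofReal_neg]
    linear_combination (Complex.I * (fderiv ℝ v x (EuclideanSpace.single j 1) : ℂ)) * h1
  rw [h1, h2, one_smul]
  exact add_comm _ _

def TS (l : List (Fin n)) : Finset (Fin n → ℕ) :=
  Fintype.piFinset fun j => Finset.range (l.count j + 1)

lemma TS_mem {l : List (Fin n)} {β : Fin n → ℕ} : β ∈ TS l ↔ ∀ j, β j ≤ l.count j := by
  simp [TS, Nat.lt_succ_iff]

lemma M1 (hv : ContDiff ℝ (⊤:ℕ∞) v)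
    (hvbdd : ∀ k : ℕ, 1 ≤ k → ∃ C : ℝ, ∀ x, ‖iteratedFDeriv ℝ k v x‖ ≤ C) :
    ∀ (l : List (Fin n)), l.Pairwise (· ≤ ·) →
    ∀ u : EuclideanSpace ℝ (Fin n) → (Fin N → ℂ), ContDiff ℝ (⊤:ℕ∞) u →
    ∀ x, Real.exp (v x) • Dword n N l (fun y => Real.exp (-v y) • u y) x
      = ∑ β ∈ TS l, Co v l β x • Dalpha n N β u x
  | [], _, u, hu, x => by
      have hTS : TS ([] : List (Fin n)) = {(0 : Fin n → ℕ)} := by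
        ext β
        rw [TS_mem, Finset.mem_singleton]
        constructor
        · intro hβ; funext i; simpa using hβ i
        · intro hβ i; rw [hβ]; simp
      have hwz : wrd (0 : Fin n → ℕ) = [] := by
        simp [wrd]
      have hDa : Dalpha n N 0 u = u := by
        rw [Dalpha_eq_Dword, hwz]; rfl
      have hCo : Co v [] (0 : Fin n → ℕ) = 1 := by rw [Co, if_pos rfl]
      rw [hTS, Finset.sum_singleton, hCo, hDa]
      show Real.exp (v x) • (Real.exp (-v x) • u x) = _
      rw [smul_smul, ← Real.exp_add, add_neg_cancel, Real.exp_zero, one_smul]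
      simp
  | j :: l, hp, u, hu, x => by
      obtain ⟨hj, hpl⟩ := List.pairwise_cons.mp hp
      set h : EuclideanSpace ℝ (Fin n) → (Fin N → ℂ) :=
        fun y => ∑ β ∈ TS l, Co v l β y • Dalpha n N β u y with hdef
      have hco_sm : ∀ β, ContDiff ℝ (⊤:ℕ∞) (Co v l β) := fun β => (isB_Co hv hvbdd l β).1
      have hDa_sm : ∀ β : Fin n → ℕ, ContDiff ℝ (⊤:ℕ∞) (Dalpha n N β u) :=
        fun β => contDiff_Dalpha hu β
      have hsm_cd : ∀ β, ContDiff ℝ (⊤:ℕ∞) (fun y => Co v l β y • Dalpha n N β u y) :=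
        fun β => ((ContinuousLinearMap.lsmul ℝ ℂ : ℂ →L[ℝ] (Fin N → ℂ) →L[ℝ] (Fin N → ℂ)).contDiff.comp
          (hco_sm β)).clm_apply (hDa_sm β)
      have hh : ContDiff ℝ (⊤:ℕ∞) h :=
        ContDiff.sum (f := fun β y => Co v l β y • Dalpha n N β u y)
          fun β _ => hsm_cd β
      have hDl : Dword n N l (fun y => Real.exp (-v y) • u y)
          = fun y => Real.exp (-v y) • h y := by
        funext y
        have hIH := M1 hv hvbdd l hpl u hu y
        have h2 : Real.exp (-(v y)) •
            (Real.exp (v y) • Dword n N l (fun y => Real.exp (-v y) • u y) y)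
            = Real.exp (-(v y)) • h y := by rw [hIH]
        rwa [smul_smul, ← Real.exp_add, neg_add_cancel, Real.exp_zero, one_smul] at h2
      show Real.exp (v x) • Dmono n N j (Dword n N l fun y => Real.exp (-v y) • u y) x = _
      rw [hDl, econj hv hh j x]
      -- expand Dmono j h x
      have hzero_lt : ∀ β ∈ TS l, ∀ i, i < j → β i = 0 := by
        intro β hβ i hij
        have h1 : l.count i = 0 := List.count_eq_zero.mpr fun hmem =>
          absurd (hj i hmem) (not_le.mpr hij)
        have := TS_mem.mp hβ i
        omega
      have hdm : Dmono n N j h x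
          = ∑ β ∈ TS l, (Ds j (Co v l β) x • Dalpha n N β u x
              + Co v l β x • Dalpha n N (addE β j) u x) := by
        rw [hdef]
        rw [Dmono_sum (TS l) (fun β => fun y => Co v l β y • Dalpha n N β u y)
          (fun β _ => ((hsm_cd β).differentiable oneNe).differentiableAt) j]
        refine Finset.sum_congr rfl fun β hβ => ?_
        rw [Dmono_smul ((hco_sm β).differentiable oneNe).differentiableAt
          ((hDa_sm β).differentiable oneNe).differentiableAt]
        rw [Dmono_Dalpha_addE j β (hzero_lt β hβ) u]
      rw [hdm]
      have hsmul : (Complex.I * pvC v j x) • h x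
          = ∑ β ∈ TS l, ((Complex.I * pvC v j x) * Co v l β x) • Dalpha n N β u x := by
        rw [hdef, Finset.smul_sum]
        exact Finset.sum_congr rfl fun β _ => smul_smul _ _ _
      rw [hsmul]
      -- LHS now: Σ (DsCo • Dβ + Co • DaddE) + Σ (Ipv*Co) • Dβ
      -- RHS: Σ_{TS (j::l)} Co (j::l) γ x • Dγ
      have hRHS : ∀ γ : Fin n → ℕ, Co v (j :: l) γ x
          = ((Complex.I * pvC v j x) * Co v l γ x + Ds j (Co v l γ) x)
            + (if γ j = 0 then 0 else Co v l (subE γ j) x) := by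
        intro γ
        rw [Co]
        by_cases hg : γ j = 0
        · simp [hg]
        · simp [hg]
      have hsub : TS l ⊆ TS (j :: l) := by
        intro β hβ
        rw [TS_mem] at hβ ⊢
        intro i
        have := hβ i
        rw [List.count_cons]
        omega
      -- part A equality
      have hA : ∑ β ∈ TS l, ((Complex.I * pvC v j x) * Co v l β x + Ds j (Co v l β) x)
            • Dalpha n N β u x
          = ∑ γ ∈ TS (j :: l), ((Complex.I * pvC v j x) * Co v l γ x + Ds j (Co v l γ) x)
            • Dalpha n N γ u x := by
        refine Finset.sum_subset hsub fun γ _ hγ => ?_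
        have hCoz : Co v l γ = 0 := Co_eq_zero l γ (by
          intro hall
          exact hγ (TS_mem.mpr hall))
        rw [hCoz, Ds_zero]
        simp
      -- part B : reindex
      have hB : ∑ β ∈ TS l, Co v l β x • Dalpha n N (addE β j) u x
          = ∑ γ ∈ (TS (j :: l)).filter (fun γ => γ j ≠ 0),
              Co v l (subE γ j) x • Dalpha n N γ u x := by
        refine Finset.sum_nbij' (fun β => addE β j) (fun γ => subE γ j) ?_ ?_ ?_ ?_ ?_
        · intro β hβ
          rw [Finset.mem_filter]
          refine ⟨TS_mem.mpr fun i => ?_, by simp [addE_apply]⟩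
          have := TS_mem.mp hβ i
          simp only [addE_apply, List.count_cons]
          rcases eq_or_ne i j with rfl | hne
          · simp; omega
          · simp [hne, Ne.symm hne]; omega
        · intro γ hγ
          rw [Finset.mem_filter] at hγ
          refine TS_mem.mpr fun i => ?_
          have h1 := TS_mem.mp hγ.1 i
          rw [List.count_cons] at h1
          simp only [subE_apply]
          rcases eq_or_ne i j with rfl | hne
          · simp at h1 ⊢; omega
          · simp [hne, Ne.symm hne] at h1 ⊢; omega
        · intro β _; exact subE_addE β j
        · intro γ hγ
          exact addE_subE γ j (Finset.mem_filter.mp hγ).2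
        · intro β _
          rw [subE_addE]
      have hBC : ∑ γ ∈ (TS (j :: l)).filter (fun γ => γ j ≠ 0),
            Co v l (subE γ j) x • Dalpha n N γ u x
          = ∑ γ ∈ TS (j :: l),
              (if γ j = 0 then 0 else Co v l (subE γ j) x) • Dalpha n N γ u x := by
        rw [Finset.sum_filter]
        refine Finset.sum_congr rfl fun γ _ => ?_
        by_cases hg : γ j = 0
        · simp [hg]
        · simp [hg]
      calc (∑ β ∈ TS l, (Ds j (Co v l β) x • Dalpha n N β u x
              + Co v l β x • Dalpha n N (addE β j) u x))
            + ∑ β ∈ TS l, ((Complex.I * pvC v j x) * Co v l β x) • Dalpha n N β u x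
          = (∑ β ∈ TS l, ((Complex.I * pvC v j x) * Co v l β x + Ds j (Co v l β) x)
              • Dalpha n N β u x)
            + ∑ β ∈ TS l, Co v l β x • Dalpha n N (addE β j) u x := by
            have hcomb : ∑ β ∈ TS l, ((Complex.I * pvC v j x) * Co v l β x
                  + Ds j (Co v l β) x) • Dalpha n N β u x
                = ∑ β ∈ TS l, (((Complex.I * pvC v j x) * Co v l β x) • Dalpha n N β u x
                  + Ds j (Co v l β) x • Dalpha n N β u x) :=
              Finset.sum_congr rfl fun β _ => add_smul _ _ _
            rw [hcomb, Finset.sum_add_distrib, Finset.sum_add_distrib]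
            abel
        _ = (∑ γ ∈ TS (j :: l), ((Complex.I * pvC v j x) * Co v l γ x + Ds j (Co v l γ) x)
              • Dalpha n N γ u x)
            + ∑ γ ∈ TS (j :: l),
                (if γ j = 0 then 0 else Co v l (subE γ j) x) • Dalpha n N γ u x := by
            rw [hA, hB, hBC]
        _ = ∑ γ ∈ TS (j :: l), Co v (j :: l) γ x • Dalpha n N γ u x := by
            rw [← Finset.sum_add_distrib]
            refine Finset.sum_congr rfl fun γ _ => ?_
            simp [hRHS γ, add_smul]

end main


section final

lemma mem_mI {n' m' : ℕ} {β : Fin n' → ℕ} :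
    β ∈ multiIndices n' m' ↔ (∀ j, β j ≤ m') ∧ (∑ j, β j) ≤ m' := by
  simp [multiIndices, Fintype.mem_piFinset, Nat.lt_succ_iff]

lemma TSfilter {m : ℕ} {α : Fin n → ℕ} (hα : α ∈ multiIndices n m) :
    TS (wrd α) = (multiIndices n m).filter fun β => ∀ j, β j ≤ α j := by
  ext β
  rw [TS_mem, Finset.mem_filter, mem_mI]
  have hcw : ∀ j, (wrd α).count j = α j := count_wrd α
  obtain ⟨hα1, hα2⟩ := mem_mI.mp hα
  constructor
  · intro hβ
    have hβ' : ∀ j, β j ≤ α j := fun j => by rw [← hcw j]; exact hβ j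
    exact ⟨⟨fun j => (hβ' j).trans (hα1 j),
      le_trans (Finset.sum_le_sum fun j _ => hβ' j) hα2⟩, hβ'⟩
  · intro ⟨_, hβ⟩ j
    rw [hcw j]
    exact hβ j

lemma mulVec_sum {N : ℕ} {ι : Type*} (s : Finset ι) (A : Matrix (Fin N) (Fin N) ℂ)
    (w : ι → (Fin N → ℂ)) : A.mulVec (∑ i ∈ s, w i) = ∑ i ∈ s, A.mulVec (w i) := by
  rw [← Matrix.mulVecLin_apply, map_sum]
  simp [Matrix.mulVecLin_apply]

lemma sum_mulVec {N : ℕ} {ι : Type*} (s : Finset ι) (M : ι → Matrix (Fin N) (Fin N) ℂ)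
    (w : Fin N → ℂ) : (∑ i ∈ s, M i).mulVec w = ∑ i ∈ s, (M i).mulVec w := by
  funext k
  simp [Matrix.mulVec, dotProduct, Matrix.sum_apply, Finset.sum_apply,
    Finset.sum_mul]
  rw [Finset.sum_comm]

end final

end WC

open WC

/-- Proposition 1.1 of the paper: conjugating
`A u = Σ_{|α| ≤ m} a_α D^α u` (with bounded uniformly continuous matrix coefficients)
by the slowly oscillating exponential weight `w = exp v` gives
`w A w⁻¹ u = Σ_{|α| ≤ m} a_α (D + i∇v)^α u + Σ_{|β| ≤ m-1} b_β D^β u`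
with continuous coefficients `b_β` vanishing at infinity, where
`(D + i∇v)^α u = Σ_{β ≤ α} binom(α,β) (i∇v)^{α-β} D^β u`. -/
theorem weight_conjugation_of_elliptic_system (n N m : ℕ)
    (hn : 0 < n) (hN : 0 < N) (hm : 0 < m)
    (a : (Fin n → ℕ) → EuclideanSpace ℝ (Fin n) → Matrix (Fin N) (Fin N) ℂ)
    (ha : ∀ α ∈ multiIndices n m,
      (∃ C : ℝ, ∀ x i j, ‖a α x i j‖ ≤ C) ∧
      (∀ i j, UniformContinuous fun x => a α x i j))
    (v : EuclideanSpace ℝ (Fin n) → ℝ)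
    (hv : ContDiff ℝ (⊤ : ℕ∞) v)
    (hvbdd : ∀ k : ℕ, 1 ≤ k → ∃ C : ℝ, ∀ x, ‖iteratedFDeriv ℝ k v x‖ ≤ C)
    (hvzero : ∀ k : ℕ, 2 ≤ k →
      Tendsto (fun x => ‖iteratedFDeriv ℝ k v x‖)
        (cocompact (EuclideanSpace ℝ (Fin n))) (nhds 0)) :
    ∃ b : (Fin n → ℕ) → EuclideanSpace ℝ (Fin n) → Matrix (Fin N) (Fin N) ℂ,
      (∀ β ∈ multiIndices n (m - 1),
        (∀ i j, Continuous fun x => b β x i j) ∧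
        (∀ i j, Tendsto (fun x => b β x i j)
          (cocompact (EuclideanSpace ℝ (Fin n))) (nhds 0))) ∧
      (∀ u : EuclideanSpace ℝ (Fin n) → (Fin N → ℂ),
        ContDiff ℝ (⊤ : ℕ∞) u → HasCompactSupport u →
        ∀ x : EuclideanSpace ℝ (Fin n),
          Real.exp (v x) •
            (∑ α ∈ multiIndices n m,
              (a α x).mulVec (Dalpha n N α (fun y => Real.exp (-v y) • u y) x)) =
          (∑ α ∈ multiIndices n m,
            (a α x).mulVec
              (∑ β ∈ (multiIndices n m).filter (fun β => ∀ j, β j ≤ α j),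
                ((∏ j, (α j).choose (β j) : ℕ) : ℂ) •
                  (∏ j, (Complex.I * (fderiv ℝ v x (EuclideanSpace.single j 1) : ℂ)) ^
                      (α j - β j)) •
                    Dalpha n N β u x)) +
          ∑ β ∈ multiIndices n (m - 1), (b β x).mulVec (Dalpha n N β u x)) := by
  classical
  have hv' : ContDiff ℝ ((⊤:ℕ∞) : WithTop ℕ∞) v := hv.of_le (by simp)
  set R : (Fin n → ℕ) → (Fin n → ℕ) → EuclideanSpace ℝ (Fin n) → ℂ :=
    fun α β => Co v (wrd α) β - MainC v α β with hRdef
  have hIsZ : ∀ α β, IsZ (R α β) := by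
    intro α β
    have hc : (fun i => (wrd α).count i) = α := funext (count_wrd α)
    have := isZ_R hv' hvbdd hvzero (wrd α) β
    rwa [hc] at this
  have hRcont : ∀ α β, Continuous (R α β) := fun α β => (hIsZ α β).1.1.continuous
  have hRtend : ∀ α β, Tendsto (R α β) (cocompact (EuclideanSpace ℝ (Fin n))) (𝓝 0) :=
    fun α β => (hIsZ α β).2 []
  refine ⟨fun β x => ∑ α ∈ multiIndices n m, (R α β x) • a α x, ?_, ?_⟩
  · -- continuity and decay of the matrix entries
    intro β _
    have hentry : ∀ i k, (fun x => (∑ α ∈ multiIndices n m, (R α β x) • a α x) i k)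
        = fun x => ∑ α ∈ multiIndices n m, R α β x * a α x i k := by
      intro i k
      funext x
      simp [Matrix.sum_apply, Matrix.smul_apply, smul_eq_mul]
    constructor
    · intro i k
      rw [hentry i k]
      exact continuous_finset_sum _ fun α hα =>
        (hRcont α β).mul ((ha α hα).2 i k).continuous
    · intro i k
      rw [hentry i k]
      have h0 : (0:ℂ) = ∑ α ∈ multiIndices n m, (0:ℂ) := by simp
      rw [h0]
      refine tendsto_finset_sum _ fun α hα => ?_
      obtain ⟨C, hC⟩ := (ha α hα).1
      refine squeeze_zero_norm (fun x => ?_) (by simpa using ((hRtend α β).norm.mul_const C))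
      rw [norm_mul]
      exact mul_le_mul_of_nonneg_left (hC x i k) (norm_nonneg _)
  · -- the main identity
    intro u hu _ x
    have hu' : ContDiff ℝ ((⊤:ℕ∞) : WithTop ℕ∞) u := hu.of_le (by simp)
    calc Real.exp (v x) •
        (∑ α ∈ multiIndices n m,
          (a α x).mulVec (Dalpha n N α (fun y => Real.exp (-v y) • u y) x))
        = ∑ α ∈ multiIndices n m, (a α x).mulVec
            (∑ β ∈ TS (wrd α), Co v (wrd α) β x • Dalpha n N β u x) := by
          rw [Finset.smul_sum]
          refine Finset.sum_congr rfl fun α hα => ?_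
          rw [← Matrix.mulVec_smul,
            Dalpha_eq_Dword (N := N) α (fun y => Real.exp (-v y) • u y)]
          exact congrArg _ (M1 hv' hvbdd (wrd α) (sorted_wrd α) u hu' x)
      _ = ∑ α ∈ multiIndices n m,
            ((a α x).mulVec (∑ β ∈ TS (wrd α), MainC v α β x • Dalpha n N β u x)
              + (a α x).mulVec (∑ β ∈ TS (wrd α), R α β x • Dalpha n N β u x)) := by
          refine Finset.sum_congr rfl fun α hα => ?_
          rw [← Matrix.mulVec_add, ← Finset.sum_add_distrib]
          refine congrArg _ (Finset.sum_congr rfl fun β _ => ?_)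
          rw [← add_smul]
          congr 1
          rw [hRdef]
          simp only [Pi.sub_apply]
          ring
      _ = (∑ α ∈ multiIndices n m,
            (a α x).mulVec
              (∑ β ∈ (multiIndices n m).filter (fun β => ∀ j, β j ≤ α j),
                ((∏ j, (α j).choose (β j) : ℕ) : ℂ) •
                  (∏ j, (Complex.I * (fderiv ℝ v x (EuclideanSpace.single j 1) : ℂ)) ^
                      (α j - β j)) •
                    Dalpha n N β u x))
          + ∑ α ∈ multiIndices n m,
              (a α x).mulVec (∑ β ∈ multiIndices n (m-1), R α β x • Dalpha n N β u x) := by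
          rw [Finset.sum_add_distrib]
          congr 1
          · refine Finset.sum_congr rfl fun α hα => ?_
            refine congrArg _ ?_
            rw [← TSfilter hα]
            refine Finset.sum_congr rfl fun β _ => ?_
            rw [smul_smul]
            rfl
          · refine Finset.sum_congr rfl fun α hα => ?_
            refine congrArg _ ?_
            have h1 : ∑ β ∈ TS (wrd α), R α β x • Dalpha n N β u x
                = ∑ β ∈ TS (wrd α) ∪ multiIndices n (m-1),
                    R α β x • Dalpha n N β u x := by
              refine Finset.sum_subset Finset.subset_union_left fun β _ hβn => ?_
              have hnot : ¬ ∀ j, β j ≤ (wrd α).count j := fun hall => hβn (TS_mem.mpr hall)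
              have hCoz : Co v (wrd α) β = 0 := Co_eq_zero _ β hnot
              have hMz : MainC v α β x = 0 := by
                push_neg at hnot
                obtain ⟨j0, hj0⟩ := hnot
                rw [count_wrd] at hj0
                rw [MainC]
                have : (∏ k, (α k).choose (β k)) = 0 :=
                  Finset.prod_eq_zero (Finset.mem_univ j0)
                    (Nat.choose_eq_zero_of_lt (by omega))
                rw [this]
                simp
              rw [hRdef]
              simp [hCoz, hMz]
            have h2 : ∑ β ∈ multiIndices n (m-1), R α β x • Dalpha n N β u x
                = ∑ β ∈ TS (wrd α) ∪ multiIndices n (m-1),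
                    R α β x • Dalpha n N β u x := by
              refine Finset.sum_subset Finset.subset_union_right fun β hβu hβn => ?_
              have hβTS : β ∈ TS (wrd α) := by
                rcases Finset.mem_union.mp hβu with h | h
                · exact h
                · exact absurd h hβn
              have hβle : ∀ j, β j ≤ α j := by
                intro j
                have := TS_mem.mp hβTS j
                rwa [count_wrd] at this
              obtain ⟨hα1, hα2⟩ := mem_mI.mp hα
              have hsums : (∑ j, β j) ≤ ∑ j, α j := Finset.sum_le_sum fun j _ => hβle j
              have hsb : ¬ (∑ j, β j) ≤ m - 1 := by
                intro hsb
                exact hβn (mem_mI.mpr ⟨fun j =>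
                  le_trans (Finset.single_le_sum (f := β)
                    (fun i _ => Nat.zero_le _) (Finset.mem_univ j)) hsb, hsb⟩)
              have hβα : β = α := by
                by_contra hne
                obtain ⟨j0, hj0⟩ := Function.ne_iff.mp hne
                have hlt : β j0 < α j0 := lt_of_le_of_ne (hβle j0) hj0
                have := Finset.sum_lt_sum (fun i (_ : i ∈ Finset.univ) => hβle i)
                  ⟨j0, Finset.mem_univ j0, hlt⟩
                omega
              subst hβα
              have hc : (fun i => (wrd β).count i) = β := funext (count_wrd β)
              have hCo1 : Co v (wrd β) β = 1 := by
                have := Co_top (v := v) (wrd β)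
                rwa [hc] at this
              rw [hRdef]
              simp only [Pi.sub_apply, hCo1, Pi.one_apply, MainC_self]
              simp
            exact h1.trans h2.symm
      _ = (∑ α ∈ multiIndices n m,
            (a α x).mulVec
              (∑ β ∈ (multiIndices n m).filter (fun β => ∀ j, β j ≤ α j),
                ((∏ j, (α j).choose (β j) : ℕ) : ℂ) •
                  (∏ j, (Complex.I * (fderiv ℝ v x (EuclideanSpace.single j 1) : ℂ)) ^
                      (α j - β j)) •
                    Dalpha n N β u x))
          + ∑ β ∈ multiIndices n (m-1),
              ((fun β x => ∑ α ∈ multiIndices n m, (R α β x) • a α x) β x).mulVec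
                (Dalpha n N β u x) := by
          congr 1
          calc ∑ α ∈ multiIndices n m,
              (a α x).mulVec (∑ β ∈ multiIndices n (m-1), R α β x • Dalpha n N β u x)
              = ∑ α ∈ multiIndices n m, ∑ β ∈ multiIndices n (m-1),
                  R α β x • (a α x).mulVec (Dalpha n N β u x) := by
                refine Finset.sum_congr rfl fun α _ => ?_
                rw [mulVec_sum]
                exact Finset.sum_congr rfl fun β _ => Matrix.mulVec_smul _ _ _
            _ = ∑ β ∈ multiIndices n (m-1), ∑ α ∈ multiIndices n m,
                  R α β x • (a α x).mulVec (Dalpha n N β u x) := Finset.sum_comm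
            _ = ∑ β ∈ multiIndices n (m-1),
                  ((fun β x => ∑ α ∈ multiIndices n m, (R α β x) • a α x) β x).mulVec
                    (Dalpha n N β u x) := by
                refine Finset.sum_congr rfl fun β _ => ?_
                rw [sum_mulVec]
                exact Finset.sum_congr rfl fun α _ =>
                  (Matrix.smul_mulVec _ _ _).symm
end

section
/- Let ρ be a real symmetric positive definite n×n matrix, let Φ₀ be a Hermitian N×N complex matrix with smallest eigenvalue γ, let λ ∈ ℝ, and let η ∈ ℝⁿ satisfy ⟨ρη, η⟩ < γ − λ. Then for every ξ ∈ ℝⁿ, the N×N complex matrix (Σ_{j,k} ρ_{jk}(ξ_j + iη_j)(ξ_k + iη_k))·E + Φ₀ − λ·E is invertible. -/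
/-!
With `c = Σ ρ_jk (ξ_j + iη_j)(ξ_k + iη_k)`, we have `Re c = ⟨ρ ξ, ξ⟩ - ⟨ρ η, η⟩ ≥ -⟨ρ η, η⟩`, so on
every unit vector `φ` the real part of `⟨(c • 1 + Φ₀ - λ • 1) φ, φ⟩` is at least
`γ - λ - ⟨ρ η, η⟩ > 0`. A matrix whose Hermitian part is positive definite has trivial kernel.
-/

open Filter Topology

/-- The quadratic form `⟨M φ, φ⟩ = Σ_i conj(φ i) * (M φ)_i` (real part) of a matrix `M`
at a vector `φ` of the complex Euclidean space. -/
noncomputable def qform (N : ℕ) (M : Matrix (Fin N) (Fin N) ℂ)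
    (φ : EuclideanSpace ℂ (Fin N)) : ℝ :=
  (∑ i, (starRingEnd ℂ) (φ i) * M.mulVec (fun j => φ j) i).re

open Matrix Complex

section qform

variable {N : ℕ} (A B : Matrix (Fin N) (Fin N) ℂ) (φ : EuclideanSpace ℂ (Fin N))

theorem qform_eq_re_dotProduct : qform N A φ = (star φ.ofLp ⬝ᵥ A *ᵥ φ.ofLp).re := rfl

theorem qform_add : qform N (A + B) φ = qform N A φ + qform N B φ := by
  simp only [qform_eq_re_dotProduct, add_mulVec, dotProduct_add, add_re]

theorem qform_sub : qform N (A - B) φ = qform N A φ - qform N B φ := by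
  simp only [qform_eq_re_dotProduct, sub_mulVec, dotProduct_sub, sub_re]

theorem qform_smul_one (c : ℂ) : qform N (c • 1) φ = c.re * ‖φ‖ ^ 2 := by
  rw [qform_eq_re_dotProduct, smul_mulVec, one_mulVec, dotProduct_smul, smul_eq_mul,
    dotProduct_comm, ← EuclideanSpace.inner_eq_star_dotProduct, inner_self_eq_norm_sq_to_K,
    RCLike.ofReal_eq_complex_ofReal, ← ofReal_pow, re_mul_ofReal]

theorem qform_eq_zero_of_mulVec_eq_zero (h : A *ᵥ φ.ofLp = 0) : qform N A φ = 0 := by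
  simp [qform_eq_re_dotProduct, h]

theorem isUnit_of_forall_qform_pos
    (h : ∀ φ : EuclideanSpace ℂ (Fin N), ‖φ‖ = 1 → 0 < qform N A φ) : IsUnit A := by
  rw [isUnit_iff_isUnit_det, isUnit_iff_ne_zero]
  intro hdet
  obtain ⟨v, hv, hAv⟩ := exists_mulVec_eq_zero_iff.mpr hdet
  set u : EuclideanSpace ℂ (Fin N) := WithLp.toLp 2 v
  have hu : u ≠ 0 := fun hu => hv (congrArg WithLp.ofLp hu)
  have hAφ : A *ᵥ ((‖u‖⁻¹ : ℂ) • u).ofLp = 0 := by simp [u, mulVec_smul, hAv]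
  exact (h _ (norm_smul_inv_norm hu)).ne' (qform_eq_zero_of_mulVec_eq_zero A _ hAφ)

end qform

theorem re_sum_sum_ofReal_mul_add_I_mul {ι : Type*} [Fintype ι] (ρ : Matrix ι ι ℝ) (ξ η : ι → ℝ) :
    (∑ j, ∑ k, (ρ j k : ℂ) * (ξ j + I * η j) * (ξ k + I * η k)).re
      = ∑ j, ∑ k, ρ j k * ξ j * ξ k - ∑ j, ∑ k, ρ j k * η j * η k := by
  simp only [re_sum, ← Finset.sum_sub_distrib]
  refine Finset.sum_congr rfl fun j _ => Finset.sum_congr rfl fun k _ => ?_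
  simp [mul_re, mul_im]

theorem Matrix.PosSemidef.sum_sum_mul_nonneg {ι : Type*} [Fintype ι] {ρ : Matrix ι ι ℝ}
    (hρ : ρ.PosSemidef) (ξ : ι → ℝ) : 0 ≤ ∑ j, ∑ k, ρ j k * ξ j * ξ k := by
  have h := hρ.dotProduct_mulVec_nonneg ξ
  simp only [dotProduct, mulVec, Finset.mul_sum, star_trivial] at h
  exact h.trans_eq (Finset.sum_congr rfl fun j _ => Finset.sum_congr rfl fun k _ => by ring)

theorem weighted_schroedinger_symbol_invertible_general (n N : ℕ)
    (ρ : Matrix (Fin n) (Fin n) ℝ) (hρ : ρ.PosDef)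
    (Φ₀ : Matrix (Fin N) (Fin N) ℂ)
    (γ : ℝ)
    (hγ : IsLeast {r : ℝ | ∃ φ : EuclideanSpace ℂ (Fin N), ‖φ‖ = 1 ∧ qform N Φ₀ φ = r} γ)
    (lam : ℝ) (η : Fin n → ℝ)
    (hη : ∑ j, ∑ k, ρ j k * η j * η k < γ - lam) :
    ∀ ξ : Fin n → ℝ,
      IsUnit ((∑ j, ∑ k, (ρ j k : ℂ) * (ξ j + Complex.I * η j) * (ξ k + Complex.I * η k)) •
        (1 : Matrix (Fin N) (Fin N) ℂ) + Φ₀ - (lam : ℂ) • 1) := by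
  intro ξ
  refine isUnit_of_forall_qform_pos _ fun φ hφ => ?_
  have hγφ : γ ≤ qform N Φ₀ φ := hγ.2 ⟨φ, hφ, rfl⟩
  rw [qform_sub, qform_add, qform_smul_one, qform_smul_one, re_sum_sum_ofReal_mul_add_I_mul, hφ,
    ofReal_re]
  linarith [hρ.posSemidef.sum_sum_mul_nonneg ξ]

/-- for a real symmetric positive definite `ρ`, a Hermitian `Φ₀` with
smallest eigenvalue `γ`, `λ ∈ ℝ` and `η ∈ ℝⁿ` with `⟨ρη, η⟩ < γ - λ`, the matrix
`(Σ_{j,k} ρ_{jk} (ξ_j + iη_j)(ξ_k + iη_k)) E + Φ₀ - λ E` is invertible for all `ξ`. -/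
theorem weighted_schroedinger_symbol_invertible (n N : ℕ)
    (ρ : Matrix (Fin n) (Fin n) ℝ) (hρ : ρ.PosDef)
    (Φ₀ : Matrix (Fin N) (Fin N) ℂ) (hΦ : Φ₀.IsHermitian)
    (γ : ℝ)
    (hγ : IsLeast {r : ℝ | ∃ φ : EuclideanSpace ℂ (Fin N), ‖φ‖ = 1 ∧ qform N Φ₀ φ = r} γ)
    (lam : ℝ) (η : Fin n → ℝ)
    (hη : ∑ j, ∑ k, ρ j k * η j * η k < γ - lam) :
    ∀ ξ : Fin n → ℝ,
      IsUnit ((∑ j, ∑ k, (ρ j k : ℂ) * (ξ j + Complex.I * η j) * (ξ k + Complex.I * η k)) •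
        (1 : Matrix (Fin N) (Fin N) ℂ) + Φ₀ - (lam : ℂ) • 1) :=
  weighted_schroedinger_symbol_invertible_general n N ρ hρ Φ₀ γ hγ lam η hη
end

section
/- Let ℍ(ℂ) denote the algebra of complex quaternions, and let q = q₁e₁ + q₂e₂ + q₃e₃ and φ = φ₁e₁ + φ₂e₂ + φ₃e₃ be purely vectorial complex quaternions. The ℂ-linear map T : ℍ(ℂ) → ℍ(ℂ) defined by T(u) = q·u + u·φ is bijective if and only if q₁² + q₂² + q₃² ≠ φ₁² + φ₂² + φ₃². -/
/-!
With `S u = q u - u φ`, both `T ∘ S` and `S ∘ T` equal `u ↦ q² u - u φ²`. For purely vectorial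
quaternions `q² = -(q₁² + q₂² + q₃²)` and `φ² = -(φ₁² + φ₂² + φ₃²)` are scalars, so
`T ∘ S = S ∘ T = c • id` with `c = (φ₁² + φ₂² + φ₃²) - (q₁² + q₂² + q₃²)`. If `c ≠ 0`, then
`c⁻¹ • S` inverts `T`. If `c = 0` and `T` is injective, then `S = 0`, i.e. `q u = u φ` for all
`u`; taking `u = 1` gives `q = φ`, which is then central and purely vectorial, hence zero, so
`T = 0` is not injective.
-/

section MulAddMul

variable {K A : Type*} [CommRing K] [Ring A] [Algebra K A] {q φ : A} {a b : K}

theorem mul_mul_sub_mul_mul_eq_smul (hq : q * q = algebraMap K A a)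
    (hφ : φ * φ = algebraMap K A b) (u : A) :
    q * (q * u) - u * φ * φ = (a - b) • u := by
  rw [← mul_assoc, mul_assoc u, hq, hφ, ← Algebra.commutes, ← Algebra.smul_def,
    ← Algebra.smul_def, sub_smul]

theorem mul_add_mul_mul_sub_mul_eq_smul (hq : q * q = algebraMap K A a)
    (hφ : φ * φ = algebraMap K A b) (u : A) :
    q * (q * u - u * φ) + (q * u - u * φ) * φ = (a - b) • u := by
  rw [← mul_mul_sub_mul_mul_eq_smul hq hφ]
  noncomm_ring

theorem mul_sub_mul_mul_add_mul_eq_smul (hq : q * q = algebraMap K A a)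
    (hφ : φ * φ = algebraMap K A b) (u : A) :
    q * (q * u + u * φ) - (q * u + u * φ) * φ = (a - b) • u := by
  rw [← mul_mul_sub_mul_mul_eq_smul hq hφ]
  noncomm_ring

theorem bijective_mul_add_mul_of_isUnit_sub (hq : q * q = algebraMap K A a)
    (hφ : φ * φ = algebraMap K A b) (hab : IsUnit (a - b)) :
    Function.Bijective fun u : A => q * u + u * φ := by
  obtain ⟨c, hc⟩ := hab.exists_left_inv
  refine Function.bijective_iff_has_inverse.mpr
    ⟨fun u => c • (q * u - u * φ), fun u => ?_, fun u => ?_⟩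
  · simp only [mul_sub_mul_mul_add_mul_eq_smul hq hφ, smul_smul, hc, one_smul]
  · simp only [mul_smul_comm, smul_mul_assoc, ← smul_add, mul_add_mul_mul_sub_mul_eq_smul hq hφ,
      smul_smul, hc, one_smul]

theorem mul_eq_mul_of_injective_mul_add_mul (hq : q * q = algebraMap K A a)
    (hφ : φ * φ = algebraMap K A a) (hinj : Function.Injective fun u : A => q * u + u * φ)
    (v : A) : q * v = v * φ := by
  have h := mul_add_mul_mul_sub_mul_eq_smul hq hφ v
  rw [sub_self, zero_smul] at h
  exact sub_eq_zero.mp (hinj (by simpa using h))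

end MulAddMul

namespace Quaternion

variable {R : Type*} [CommRing R] {q : ℍ[R]}

theorem mul_self_of_re_eq_zero (hq : q.re = 0) :
    q * q = algebraMap R ℍ[R] (-(q.imI ^ 2 + q.imJ ^ 2 + q.imK ^ 2)) := by
  rw [algebraMap_def]
  ext <;> simp only [re_mul, imI_mul, imJ_mul, imK_mul, re_coe, imI_coe, imJ_coe, imK_coe, hq] <;>
    ring

theorem eq_zero_of_re_eq_zero_of_forall_mul_comm [IsAddTorsionFree R] (hq : q.re = 0)
    (hcomm : ∀ u : ℍ[R], q * u = u * q) : q = 0 := by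
  -- `q i - i q = 2 (q₃ j - q₂ k)` and `q j - j q = 2 (q₁ k - q₃ i)`; torsion-freeness cancels the 2.
  have hiJ := congrArg QuaternionAlgebra.imJ (hcomm ((equivTuple R).symm ![0, 1, 0, 0]))
  have hiK := congrArg QuaternionAlgebra.imK (hcomm ((equivTuple R).symm ![0, 1, 0, 0]))
  have hjK := congrArg QuaternionAlgebra.imK (hcomm ((equivTuple R).symm ![0, 0, 1, 0]))
  simp only [imJ_mul, imK_mul] at hiJ hiK hjK
  simp only [equivTuple_symm_apply, Fin.isValue, Matrix.cons_val_zero, Matrix.cons_val_one,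
    Matrix.cons_val, mul_zero, sub_self, add_zero, mul_one, zero_add, zero_mul, one_mul, zero_sub,
    sub_zero] at hiJ hiK hjK
  ext <;> simp only [hq, re_zero, imI_zero, imJ_zero, imK_zero] <;> grind

end Quaternion

/-- for purely vectorial complex quaternions `q = q₁e₁ + q₂e₂ + q₃e₃` and
`φ = φ₁e₁ + φ₂e₂ + φ₃e₃`, the (ℂ-linear) map `u ↦ qu + uφ` on the complex quaternions is
bijective if and only if `q₁² + q₂² + q₃² ≠ φ₁² + φ₂² + φ₃²`. -/
theorem quaternionic_symbol_bijective_iff (q φ : Quaternion ℂ)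
    (hq : q.re = 0) (hφ : φ.re = 0) :
    Function.Bijective (fun u : Quaternion ℂ => q * u + u * φ) ↔
      q.imI ^ 2 + q.imJ ^ 2 + q.imK ^ 2 ≠ φ.imI ^ 2 + φ.imJ ^ 2 + φ.imK ^ 2 := by
  have hq2 := Quaternion.mul_self_of_re_eq_zero hq
  have hφ2 := Quaternion.mul_self_of_re_eq_zero hφ
  constructor
  · intro hT hN
    rw [← hN] at hφ2
    have hcomm := mul_eq_mul_of_injective_mul_add_mul hq2 hφ2 hT.injective
    obtain rfl : q = φ := by simpa using hcomm 1
    have hq0 := Quaternion.eq_zero_of_re_eq_zero_of_forall_mul_comm hq hcomm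
    exact one_ne_zero (hT.injective (by simp [hq0]))
  · intro hN
    refine bijective_mul_add_mul_of_isUnit_sub hq2 hφ2 (isUnit_iff_ne_zero.mpr ?_)
    rwa [sub_ne_zero, ne_eq, neg_inj]
end

section
/- Let γ₀, γ₁, γ₂, γ₃ be 4×4 complex matrices satisfying γ_jγ_k + γ_kγ_j = 2δ_{jk}E for all j, k ∈ {0,1,2,3}, with E the 4×4 identity. Let φ = (φ^{jk}) be a real symmetric positive definite 3×3 matrix and ρ := φ·φ, let c > 0, h > 0, m > 0, and let μ ∈ ℝ with |μ| < mc². Let ξ, η ∈ ℝ³ and t ∈ [−1, 1] be such that c²h²t²⟨ρη, η⟩ < m²c⁴ − μ². Then the 4×4 matrix c·h·Σ_{k=1}^{3}(Σ_{j=1}^{3} φ^{jk}(ξ_j + i t η_j))γ_k + mc²γ₀ − μE is invertible. -/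
/-!
Write the symbol as `A - μE` with `A = ∑ᵢ aᵢ γᵢ`. The anticommutation relations give
`A² = (∑ᵢ aᵢ²) E`, hence `(A - μE)(A + μE) = (∑ᵢ aᵢ² - μ²) E`, and it suffices that
`∑ᵢ aᵢ² ≠ μ²`. Here `a₀ = mc²` and `aₖ = ch (φᵀ(ξ + itη))ₖ`; since `Re z² ≥ -(Im z)²`, the real
part of `∑ᵢ aᵢ²` is at least `m²c⁴ - c²h²t² |φᵀη|² = m²c⁴ - c²h²t² ⟨ρη, η⟩`, which exceeds `μ²`.
-/

open Finset Matrix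

section Clifford

variable {𝕜 R ι : Type*} [Field 𝕜] [Ring R] [Algebra 𝕜 R]

theorem sum_smul_mul_self_of_anticommute [NeZero (2 : 𝕜)] [Fintype ι] [DecidableEq ι]
    {γ : ι → R} (hγ : ∀ i j, γ i * γ j + γ j * γ i = if i = j then (2 : 𝕜) • 1 else 0)
    (a : ι → 𝕜) :
    (∑ i, a i • γ i) * (∑ i, a i • γ i) = (∑ i, a i ^ 2) • 1 := by
  have hexpand : (∑ i, a i • γ i) * (∑ i, a i • γ i) =
      ∑ i, ∑ j, (a i * a j) • (γ i * γ j) := by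
    simp only [sum_mul_sum, smul_mul_smul_comm]
  refine smul_right_injective R (two_ne_zero (α := 𝕜)) ?_
  calc (2 : 𝕜) • ((∑ i, a i • γ i) * (∑ i, a i • γ i))
      = ∑ i, ∑ j, (a i * a j) • (γ i * γ j) + ∑ i, ∑ j, (a j * a i) • (γ j * γ i) := by
        rw [two_smul, hexpand, sum_comm (f := fun i j => (a j * a i) • (γ j * γ i))]
    _ = ∑ i, ∑ j, (a i * a j) • (γ i * γ j + γ j * γ i) := by
        simp only [← sum_add_distrib, mul_comm (a _) (a _), smul_add]
    _ = (2 : 𝕜) • ((∑ i, a i ^ 2) • 1) := by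
        simp only [hγ, smul_ite, smul_zero, sum_ite_eq, mem_univ, if_true, smul_smul, ← sum_smul]
        simp only [sq, mul_comm (2 : 𝕜), ← sum_mul]

theorem isUnit_sub_smul_one_of_mul_self_eq {x : R} {s μ : 𝕜} (hx : x * x = s • 1)
    (hμ : s ≠ μ ^ 2) : IsUnit (x - μ • 1) := by
  have hcomm : Commute x (μ • 1) := (Commute.one_right x).smul_right μ
  have hfactor : (x - μ • 1) * (x + μ • 1) = (s - μ ^ 2) • 1 := by
    rw [← hcomm.mul_self_sub_mul_self_eq', hx, sub_smul, smul_mul_smul_comm, one_mul, sq]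
  have hfactor' : (x + μ • 1) * (x - μ • 1) = (s - μ ^ 2) • 1 := by
    rw [← hcomm.mul_self_sub_mul_self_eq, hx, sub_smul, smul_mul_smul_comm, one_mul, sq]
  have hne : s - μ ^ 2 ≠ 0 := sub_ne_zero.mpr hμ
  refine ⟨⟨x - μ • 1, (s - μ ^ 2)⁻¹ • (x + μ • 1), ?_, ?_⟩, rfl⟩
  · rw [mul_smul_comm, hfactor, smul_smul, inv_mul_cancel₀ hne, one_smul]
  · rw [smul_mul_assoc, hfactor', smul_smul, inv_mul_cancel₀ hne, one_smul]

end Clifford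

theorem Matrix.sum_mul_transpose_apply_mul_mul {m n R : Type*} [Fintype m] [Fintype n]
    [CommSemiring R] (φ : Matrix m n R) (η : m → R) :
    ∑ j, ∑ k, (φ * φᵀ) j k * η j * η k = ∑ l, (∑ j, φ j l * η j) ^ 2 := by
  simp only [sq, sum_mul_sum]
  conv_rhs => rw [sum_comm]
  refine sum_congr rfl fun j _ => ?_
  rw [sum_comm]
  refine sum_congr rfl fun k _ => ?_
  simp only [mul_apply, transpose_apply, sum_mul]
  exact sum_congr rfl fun l _ => by ring

theorem Complex.neg_sum_im_sq_le_re_sum_sq {ι : Type*} (s : Finset ι) (z : ι → ℂ) :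
    -∑ i ∈ s, (z i).im ^ 2 ≤ (∑ i ∈ s, z i ^ 2).re := by
  rw [Complex.re_sum, ← sum_neg_distrib]
  refine sum_le_sum fun i _ => ?_
  rw [sq (z i), Complex.mul_re]
  nlinarith [sq_nonneg (z i).re]

theorem weighted_dirac_symbol_invertible_general
    (γ : Fin 4 → Matrix (Fin 4) (Fin 4) ℂ)
    (hγ : ∀ j k, γ j * γ k + γ k * γ j =
      if j = k then (2 : ℂ) • (1 : Matrix (Fin 4) (Fin 4) ℂ) else 0)
    (φ : Matrix (Fin 3) (Fin 3) ℝ) (hφsymm : φ.IsSymm)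
    (c h m : ℝ)
    (μ : ℝ)
    (ξ η : Fin 3 → ℝ) (t : ℝ)
    (hquad : c ^ 2 * h ^ 2 * t ^ 2 * (∑ j, ∑ k, (φ * φ) j k * η j * η k) <
      m ^ 2 * c ^ 4 - μ ^ 2) :
    IsUnit
      (((c * h : ℝ) : ℂ) •
          ∑ k : Fin 3, (∑ j : Fin 3, (φ j k : ℂ) * (ξ j + Complex.I * t * η j)) • γ k.succ +
        ((m * c ^ 2 : ℝ) : ℂ) • γ 0 - ((μ : ℝ) : ℂ) • (1 : Matrix (Fin 4) (Fin 4) ℂ)) := by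
  set p : Fin 3 → ℂ := fun k =>
    ((c * h : ℝ) : ℂ) * ∑ j, (φ j k : ℂ) * (ξ j + Complex.I * t * η j)
  set a : Fin 4 → ℂ := Fin.cons ((m * c ^ 2 : ℝ) : ℂ) p
  have hsymbol : ∑ i, a i • γ i = ((c * h : ℝ) : ℂ) •
      ∑ k, (∑ j, (φ j k : ℂ) * (ξ j + Complex.I * t * η j)) • γ k.succ +
        ((m * c ^ 2 : ℝ) : ℂ) • γ 0 := by
    rw [Fin.sum_univ_succ, smul_sum, add_comm]
    simp only [a, p, Fin.cons_zero, Fin.cons_succ, smul_smul]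
  have him : ∀ k, (p k).im = c * h * t * ∑ j, φ j k * η j := by
    intro k
    simp only [p, Complex.im_sum, Complex.add_im, Complex.ofReal_im,
      Complex.mul_im, Complex.I_re, Complex.I_im, Complex.ofReal_re, mul_sum]
    exact sum_congr rfl fun j _ => by ring
  have hre : μ ^ 2 < (∑ i, a i ^ 2).re := by
    calc μ ^ 2 < m ^ 2 * c ^ 4 - ∑ k, (p k).im ^ 2 := by
          rw [show φ * φ = φ * φᵀ by rw [hφsymm.eq], sum_mul_transpose_apply_mul_mul] at hquad
          simp only [him, mul_pow, ← mul_sum]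
          linarith
      _ ≤ m ^ 2 * c ^ 4 + (∑ k, p k ^ 2).re := by
          linarith [Complex.neg_sum_im_sq_le_re_sum_sq univ p]
      _ = (∑ i, a i ^ 2).re := by
          simp only [a, Fin.sum_univ_succ, Fin.cons_zero, Fin.cons_succ, Complex.add_re,
            ← Complex.ofReal_pow, Complex.ofReal_re]
          ring
  rw [← hsymbol]
  refine isUnit_sub_smul_one_of_mul_self_eq (sum_smul_mul_self_of_anticommute hγ a) fun hsq => ?_
  exact hre.ne' (by rw [hsq, ← Complex.ofReal_pow, Complex.ofReal_re])

/-- pointwise invertibility in the proof of the paper's Theorem 6.3: for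
Dirac matrices `γ₀,…,γ₃`, a real symmetric positive definite 3×3 matrix `φ` with
`ρ := φ·φ`, `c, h, m > 0`, a real `μ` with `|μ| < mc²`, and `ξ, η ∈ ℝ³`, `t ∈ [-1,1]`
with `c²h²t² ⟨ρη, η⟩ < m²c⁴ - μ²`, the matrix
`ch Σ_k (Σ_j φ^{jk}(ξ_j + itη_j)) γ_k + mc² γ₀ - μE` is invertible. -/
theorem weighted_dirac_symbol_invertible
    (γ : Fin 4 → Matrix (Fin 4) (Fin 4) ℂ)
    (hγ : ∀ j k, γ j * γ k + γ k * γ j =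
      if j = k then (2 : ℂ) • (1 : Matrix (Fin 4) (Fin 4) ℂ) else 0)
    (φ : Matrix (Fin 3) (Fin 3) ℝ) (hφsymm : φ.IsSymm) (hφpos : φ.PosDef)
    (c h m : ℝ) (hc : 0 < c) (hh : 0 < h) (hm : 0 < m)
    (μ : ℝ) (hμ : |μ| < m * c ^ 2)
    (ξ η : Fin 3 → ℝ) (t : ℝ) (ht : t ∈ Set.Icc (-1 : ℝ) 1)
    (hquad : c ^ 2 * h ^ 2 * t ^ 2 * (∑ j, ∑ k, (φ * φ) j k * η j * η k) <
      m ^ 2 * c ^ 4 - μ ^ 2) :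
    IsUnit
      (((c * h : ℝ) : ℂ) •
          ∑ k : Fin 3, (∑ j : Fin 3, (φ j k : ℂ) * (ξ j + Complex.I * t * η j)) • γ k.succ +
        ((m * c ^ 2 : ℝ) : ℂ) • γ 0 - ((μ : ℝ) : ℂ) • (1 : Matrix (Fin 4) (Fin 4) ℂ)) :=
  weighted_dirac_symbol_invertible_general γ hγ φ hφsymm c h m μ ξ η t hquad
end
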